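/- arXiv:0906.1802 — 2 statements merged into one kernel-verified Lean document; each statement's English description precedes it below -/
import Mathlib

section
/- Let 𝔤 = 𝔥 ⊕ 𝔪 be a reductive decomposition with 𝔪 = 𝔥^⊥ relative to an invariant inner product on 𝔤. If 𝔞 is the orthogonal complement in 𝔤 of 𝔱 = [𝔪,𝔪] + 𝔪, then 𝔞 ⊆ 𝔥 and 𝔞 is an ideal of 𝔤. -/
/-- Let `𝔤 = 𝔥 ⊕ 𝔪` be a reductive decomposition with `𝔪 = 𝔥ᗮ`
relative to an invariant inner product `B` on `𝔤`. If `𝔞` is the orthogonal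
complement of `𝔱 = Span [𝔪,𝔪] + 𝔪`, then `𝔞 ⊆ 𝔥` and `𝔞` is an ideal of `𝔤`. -/
theorem affine_group_stmt_9
    {𝔤 : Type*} [LieRing 𝔤] [LieAlgebra ℝ 𝔤] [FiniteDimensional ℝ 𝔤]
    (B : LinearMap.BilinForm ℝ 𝔤)
    (hsymm : ∀ x y : 𝔤, B x y = B y x)
    (hpos : ∀ x : 𝔤, x ≠ 0 → 0 < B x x)
    (hinv : ∀ x y z : 𝔤, B ⁅x, y⁆ z + B y ⁅x, z⁆ = 0)
    (𝔥 : LieSubalgebra ℝ 𝔤) (𝔪 𝔱 𝔞 : Submodule ℝ 𝔤)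
    (h𝔪 : 𝔪 = B.orthogonal 𝔥.toSubmodule)
    (h𝔱 : 𝔱 = Submodule.span ℝ {z : 𝔤 | ∃ x ∈ 𝔪, ∃ y ∈ 𝔪, ⁅x, y⁆ = z} ⊔ 𝔪)
    (h𝔞 : 𝔞 = B.orthogonal 𝔱) :
    𝔞 ≤ 𝔥.toSubmodule ∧ (∀ x : 𝔤, ∀ y ∈ 𝔞, ⁅x, y⁆ ∈ 𝔞) := by
  have hrefl : B.IsRefl := fun x y h => by rw [hsymm]; exact h
  have hzero : ∀ x : 𝔤, B x x = 0 → x = 0 := by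
    intro x hx
    by_contra h
    exact (hpos x h).ne' hx
  have hnd : B.Nondegenerate := ⟨fun x hx => hzero x (hx x), fun x hx => hzero x (hx x)⟩
  have h𝔪𝔱 : 𝔪 ≤ 𝔱 := h𝔱 ▸ le_sup_right
  -- Part 1 : 𝔞 ≤ 𝔥
  have h1 : 𝔞 ≤ 𝔥.toSubmodule := by
    rw [h𝔞, ← B.orthogonal_orthogonal hnd hrefl 𝔥.toSubmodule, ← h𝔪]
    exact B.orthogonal_le h𝔪𝔱
  -- basic orthogonality facts for elements of 𝔞
  have ha𝔪 : ∀ a ∈ 𝔞, ∀ m ∈ 𝔪, B m a = 0 := by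
    intro a ha m hm
    rw [h𝔞] at ha
    exact ha m (h𝔪𝔱 hm)
  have haS : ∀ a ∈ 𝔞, ∀ m₁ ∈ 𝔪, ∀ m₂ ∈ 𝔪, B ⁅m₁, m₂⁆ a = 0 := by
    intro a ha m₁ hm₁ m₂ hm₂
    rw [h𝔞] at ha
    refine ha _ ?_
    rw [h𝔱]
    exact Submodule.mem_sup_left (Submodule.subset_span ⟨m₁, hm₁, m₂, hm₂, rfl⟩)
  -- [𝔥, 𝔪] ⊆ 𝔪
  have hbr : ∀ h ∈ 𝔥.toSubmodule, ∀ m ∈ 𝔪, ⁅h, m⁆ ∈ 𝔪 := by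
    intro h hh m hm
    rw [h𝔪]
    intro h' hh'
    have := hinv h h' m
    have hbr' : ⁅h, h'⁆ ∈ 𝔥.toSubmodule := 𝔥.lie_mem hh hh'
    have hm' : B ⁅h, h'⁆ m = 0 := by
      rw [h𝔪] at hm
      exact hm _ hbr'
    simpa [hm'] using this
  -- [𝔞, 𝔪] = 0
  have hbrm : ∀ a ∈ 𝔞, ∀ m ∈ 𝔪, ⁅a, m⁆ = 0 := by
    intro a ha m hm
    have hc𝔪 : ⁅a, m⁆ ∈ 𝔪 := hbr a (h1 ha) m hm
    have key : ∀ m' ∈ 𝔪, B ⁅a, m⁆ m' = 0 := by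
      intro m' hm'
      have h2 := hinv m a m'
      have h3 : B a ⁅m, m'⁆ = 0 := by
        rw [hsymm]
        exact haS a ha m hm m' hm'
      have : B ⁅m, a⁆ m' = 0 := by linarith
      have h4 : ⁅a, m⁆ = -⁅m, a⁆ := by rw [← lie_skew m a, neg_neg]
      rw [h4, map_neg, LinearMap.neg_apply, this, neg_zero]
    exact hzero _ (key _ hc𝔪)
  refine ⟨h1, ?_⟩
  -- decomposition 𝔤 = 𝔥 ⊔ 𝔪
  have hres : (B.restrict 𝔥.toSubmodule).Nondegenerate := by
    refine ⟨fun x hx => ?_, fun x hx => ?_⟩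
    have := hx x
    simp only [LinearMap.BilinForm.restrict_apply] at this
    exact Subtype.ext (hzero _ this)
    have := hx x
    simp only [LinearMap.BilinForm.restrict_apply] at this
    exact Subtype.ext (hzero _ this)
  have hcompl : IsCompl 𝔥.toSubmodule (B.orthogonal 𝔥.toSubmodule) :=
    LinearMap.BilinForm.isCompl_orthogonal_of_restrict_nondegenerate hrefl hres
  have hsup : 𝔥.toSubmodule ⊔ 𝔪 = ⊤ := by rw [h𝔪]; exact hcompl.sup_eq_top
  -- ideal property
  intro x a ha
  obtain ⟨h, hh, m, hm, rfl⟩ := Submodule.mem_sup.mp (hsup ▸ Submodule.mem_top (x := x))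
  have hma : ⁅m, a⁆ = 0 := by
    rw [← lie_skew m a, hbrm a ha m hm, neg_zero]
  have hxa : ⁅h + m, a⁆ = ⁅h, a⁆ := by rw [add_lie, hma, add_zero]
  rw [hxa, h𝔞]
  -- show ⁅h, a⁆ ⊥ 𝔱
  intro t ht
  rw [h𝔱] at ht
  have key : Submodule.span ℝ {z : 𝔤 | ∃ x ∈ 𝔪, ∃ y ∈ 𝔪, ⁅x, y⁆ = z} ⊔ 𝔪 ≤
      LinearMap.ker (B.flip ⁅h, a⁆) := by
    refine sup_le ?_ ?_
    · rw [Submodule.span_le]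
      rintro z ⟨m₁, hm₁, m₂, hm₂, rfl⟩
      simp only [SetLike.mem_coe, LinearMap.mem_ker, LinearMap.flip_apply]
      have h2 := hinv h a ⁅m₁, m₂⁆
      have hj : ⁅h, ⁅m₁, m₂⁆⁆ = ⁅⁅h, m₁⁆, m₂⁆ + ⁅m₁, ⁅h, m₂⁆⁆ := leibniz_lie h m₁ m₂
      have e1 : B a ⁅⁅h, m₁⁆, m₂⁆ = 0 := by
        rw [hsymm]
        exact haS a ha _ (hbr h hh m₁ hm₁) m₂ hm₂
      have e2 : B a ⁅m₁, ⁅h, m₂⁆⁆ = 0 := by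
        rw [hsymm]
        exact haS a ha m₁ hm₁ _ (hbr h hh m₂ hm₂)
      have : B ⁅h, a⁆ ⁅m₁, m₂⁆ = 0 := by
        rw [hj, map_add] at h2
        linarith
      rw [hsymm] at this
      exact this
    · intro m' hm'
      simp only [LinearMap.mem_ker, LinearMap.flip_apply]
      have h2 := hinv h a m'
      have e1 : B a ⁅h, m'⁆ = 0 := by
        rw [hsymm]
        exact ha𝔪 a ha _ (hbr h hh m' hm')
      have : B ⁅h, a⁆ m' = 0 := by linarith
      rw [hsymm] at this
      exact this
  have := key ht
  simpa using this
end

section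
/- Let G be a connected Lie group acting transitively, faithfully and isometrically on a compact normal homogeneous space M = G/H with reductive decomposition 𝔤 = 𝔥 ⊕ 𝔥^⊥. Then 𝔤 = [𝔥^⊥, 𝔥^⊥] + 𝔥^⊥. Algebraic version: if 𝔤 carries an invariant inner product, 𝔥 ⊆ 𝔤 is a subalgebra containing no nonzero ideal of 𝔤, and 𝔪 = 𝔥^⊥, then 𝔤 = Span([𝔪,𝔪]) + 𝔪. -/
/-- algebraic version: If `𝔤` carries an invariant inner product
`B`, `𝔥 ⊆ 𝔤` is a subalgebra containing no nonzero ideal of `𝔤` (effectivity),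
and `𝔪 = 𝔥ᗮ`, then `𝔤 = Span [𝔪,𝔪] + 𝔪`, i.e. `𝔤` is the transvection
algebra of the canonical connection. -/
theorem affine_group_stmt_17
    {𝔤 : Type*} [LieRing 𝔤] [LieAlgebra ℝ 𝔤] [FiniteDimensional ℝ 𝔤]
    (B : LinearMap.BilinForm ℝ 𝔤)
    (hsymm : ∀ x y : 𝔤, B x y = B y x)
    (hpos : ∀ x : 𝔤, x ≠ 0 → 0 < B x x)
    (hinv : ∀ x y z : 𝔤, B ⁅x, y⁆ z + B y ⁅x, z⁆ = 0)
    (𝔥 : LieSubalgebra ℝ 𝔤)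
    (heff : ∀ I : LieIdeal ℝ 𝔤, I.toSubmodule ≤ 𝔥.toSubmodule → I = ⊥)
    (𝔪 : Submodule ℝ 𝔤) (h𝔪 : 𝔪 = B.orthogonal 𝔥.toSubmodule) :
    Submodule.span ℝ {z : 𝔤 | ∃ x ∈ 𝔪, ∃ y ∈ 𝔪, ⁅x, y⁆ = z} ⊔ 𝔪 = ⊤ := by
  set T : Set 𝔤 := {z : 𝔤 | ∃ x ∈ 𝔪, ∃ y ∈ 𝔪, ⁅x, y⁆ = z} with hT
  set S : Submodule ℝ 𝔤 := Submodule.span ℝ T ⊔ 𝔪 with hS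
  -- basic facts about B
  have hrefl : B.IsRefl := fun x y h => by rw [hsymm]; exact h
  have hzero : ∀ x : 𝔤, B x x = 0 → x = 0 := by
    intro x hx
    by_contra h
    exact absurd hx (ne_of_gt (hpos x h))
  have hrestr : ∀ W : Submodule ℝ 𝔤, (B.restrict W).Nondegenerate := by
    intro W
    refine ⟨fun x hx => ?_, fun x hx => ?_⟩ <;>
    · have := hx x
      simp only [LinearMap.BilinForm.restrict_apply] at this
      exact Subtype.ext (hzero x this)
  -- B h m = 0 for h ∈ 𝔥, m ∈ 𝔪
  have hBhm : ∀ h ∈ 𝔥.toSubmodule, ∀ m ∈ 𝔪, B h m = 0 := by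
    intro h hh m hm
    rw [h𝔪] at hm
    exact hm h hh
  -- decomposition 𝔤 = 𝔥 ⊕ 𝔪
  have hcompl : IsCompl 𝔥.toSubmodule 𝔪 := by
    rw [h𝔪]
    exact B.isCompl_orthogonal_of_restrict_nondegenerate hrefl (hrestr _)
  have hdecomp : ∀ x : 𝔤, ∃ h ∈ 𝔥.toSubmodule, ∃ m ∈ 𝔪, x = h + m := by
    intro x
    have : x ∈ 𝔥.toSubmodule ⊔ 𝔪 := hcompl.sup_eq_top ▸ Submodule.mem_top
    obtain ⟨h, hh, m, hm, hx⟩ := Submodule.mem_sup.mp this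
    exact ⟨h, hh, m, hm, hx.symm⟩
  -- [𝔥, 𝔪] ⊆ 𝔪
  have hbrac : ∀ h ∈ 𝔥.toSubmodule, ∀ m ∈ 𝔪, ⁅h, m⁆ ∈ 𝔪 := by
    intro h hh m hm
    rw [h𝔪]
    intro h' hh'
    have hlie : ⁅h, h'⁆ ∈ 𝔥.toSubmodule := 𝔥.lie_mem hh hh'
    have h1 : B h' ⁅h, m⁆ = -B ⁅h, h'⁆ m := by linarith [hinv h h' m]
    rw [h1, hBhm _ hlie _ hm, neg_zero]
  -- elements of Sᗮ are orthogonal to everything in S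
  have horthS : ∀ x ∈ B.orthogonal S, ∀ s ∈ S, B x s = 0 := by
    intro x hx s hs
    rw [hsymm]
    exact hx s hs
  have hTS : ∀ z ∈ T, z ∈ S := fun z hz =>
    le_sup_left (a := Submodule.span ℝ T) (b := 𝔪) (Submodule.subset_span hz)
  have hmS : ∀ m ∈ 𝔪, m ∈ S := fun m hm => le_sup_right (a := Submodule.span ℝ T) hm
  -- Sᗮ ⊆ 𝔥
  have hSh : B.orthogonal S ≤ 𝔥.toSubmodule := by
    intro x hx
    obtain ⟨h, hh, m, hm, hxd⟩ := hdecomp x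
    have hmm : B m m = 0 := by
      have h1 : B x m = 0 := horthS x hx m (hmS m hm)
      have h2 : B h m = 0 := hBhm h hh m hm
      have : B (h + m) m = 0 := by rw [← hxd]; exact h1
      rw [map_add, LinearMap.add_apply, h2, zero_add] at this
      exact this
    have : m = 0 := hzero m hmm
    rw [hxd, this, add_zero]
    exact hh
  -- key: for x ∈ Sᗮ and m ∈ 𝔪, ⁅x, m⁆ = 0
  have hxm0 : ∀ x ∈ B.orthogonal S, ∀ m ∈ 𝔪, ⁅x, m⁆ = 0 := by
    intro x hx m hm
    have hxh : x ∈ 𝔥.toSubmodule := hSh hx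
    have hxmm : ⁅x, m⁆ ∈ 𝔪 := hbrac x hxh m hm
    apply hzero
    -- B ⁅x,m⁆ ⁅x,m⁆ = B x ⁅m, ⁅x,m⁆⁆  (via invariance)
    have h1 : B ⁅m, x⁆ ⁅x, m⁆ + B x ⁅m, ⁅x, m⁆⁆ = 0 := hinv m x ⁅x, m⁆
    have h2 : B x ⁅m, ⁅x, m⁆⁆ = 0 := by
      apply horthS x hx
      exact hTS _ ⟨m, hm, ⁅x, m⁆, hxmm, rfl⟩
    have h3 : B ⁅m, x⁆ ⁅x, m⁆ = 0 := by linarith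
    rw [← lie_skew m x, map_neg, LinearMap.neg_apply, neg_eq_zero] at h3
    exact h3
  -- Sᗮ is a Lie ideal
  have hlieS : ∀ (y : 𝔤), ∀ x ∈ B.orthogonal S, ⁅y, x⁆ ∈ B.orthogonal S := by
    intro y x hx
    obtain ⟨h, hh, m, hm, hyd⟩ := hdecomp y
    have hxh : x ∈ 𝔥.toSubmodule := hSh hx
    have hmx : ⁅m, x⁆ = 0 := by
      rw [← neg_eq_zero, lie_skew]
      exact hxm0 x hx m hm
    have : ⁅y, x⁆ = ⁅h, x⁆ := by rw [hyd, add_lie, hmx, add_zero]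
    rw [this]
    -- show ⁅h, x⁆ ∈ Sᗮ
    have hhx : ⁅h, x⁆ ∈ 𝔥.toSubmodule := 𝔥.lie_mem hh hxh
    intro n hn
    rw [hsymm]
    -- B ⁅h,x⁆ n = 0 for n ∈ S; n = a + b with a ∈ span T, b ∈ 𝔪
    obtain ⟨a, ha, b, hb, hn'⟩ := Submodule.mem_sup.mp hn
    have hBb : B ⁅h, x⁆ b = 0 := hBhm _ hhx b hb
    have hBa : ∀ a' ∈ Submodule.span ℝ T, B ⁅h, x⁆ a' = 0 := by
      intro a' ha'
      induction ha' using Submodule.span_induction with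
      | mem z hz =>
        obtain ⟨m₁, hm₁, m₂, hm₂, rfl⟩ := hz
        -- B ⁅h,x⁆ ⁅m₁,m₂⁆ = -B x ⁅h,⁅m₁,m₂⁆⁆
        have h1 : B ⁅h, x⁆ ⁅m₁, m₂⁆ + B x ⁅h, ⁅m₁, m₂⁆⁆ = 0 := hinv h x ⁅m₁, m₂⁆
        have hleib : ⁅h, ⁅m₁, m₂⁆⁆ = ⁅⁅h, m₁⁆, m₂⁆ + ⁅m₁, ⁅h, m₂⁆⁆ := leibniz_lie h m₁ m₂
        have hs1 : ⁅⁅h, m₁⁆, m₂⁆ ∈ S := hTS _ ⟨⁅h, m₁⁆, hbrac h hh m₁ hm₁, m₂, hm₂, rfl⟩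
        have hs2 : ⁅m₁, ⁅h, m₂⁆⁆ ∈ S := hTS _ ⟨m₁, hm₁, ⁅h, m₂⁆, hbrac h hh m₂ hm₂, rfl⟩
        have h2 : B x ⁅h, ⁅m₁, m₂⁆⁆ = 0 := by
          rw [hleib, map_add]
          rw [horthS x hx _ hs1, horthS x hx _ hs2, add_zero]
        linarith
      | zero => simp
      | add u v hu hv ihu ihv => rw [map_add, ihu, ihv, add_zero]
      | smul c u hu ihu => rw [map_smul, ihu, smul_zero]
    rw [← hn', map_add, hBa a ha, hBb, add_zero]
  -- package as a Lie ideal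
  let I : LieIdeal ℝ 𝔤 :=
    { toSubmodule := B.orthogonal S
      lie_mem := fun {y x} hx => hlieS y x hx }
  have hIbot : I = ⊥ := heff I hSh
  have hSbot : B.orthogonal S = ⊥ := by
    have : I.toSubmodule = (⊥ : LieIdeal ℝ 𝔤).toSubmodule := by rw [hIbot]
    rwa [LieSubmodule.bot_toSubmodule] at this
  exact B.eq_top_of_restrict_nondegenerate_of_orthogonal_eq_bot hrefl (hrestr S) hSbot
end
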